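/- With the two-variable two-bridge setup, let (m₀, u₀) ∈ ℂ² with m₀ ∉ {0} and φ_W(m₀, u₀) = 0. Then the partial derivatives of the matrix-valued function R(m, u) = W·A·W⁻¹·B⁻¹ at (m₀, u₀) satisfy ∂R/∂m (m₀,u₀) = (∂φ_W/∂m)(m₀,u₀) · M(m₀,u₀) and ∂R/∂u (m₀,u₀) = (∂φ_W/∂u)(m₀,u₀) · M(m₀,u₀), where M(m,u) = [[W₁₁u − W₂₁m⁻¹, W₁₁m], [W₂₁u + W₂₂um⁻¹, W₂₁m]]. -/

import Mathlib

open Matrix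

/-- `ε_i = (−1)^⌊iq/p⌋`. -/
def eps (p : ℕ) (q : ℤ) (i : ℕ) : ℤ :=
  if ((i : ℤ) * q).fdiv p % 2 = 0 then 1 else -1

/-- `A(m,u) = [[m, 1], [0, m⁻¹]]`. -/
noncomputable def Amat (m : ℂ) : Matrix (Fin 2) (Fin 2) ℂ := !![m, 1; 0, m⁻¹]

/-- `B(m,u) = [[m, 0], [−u, m⁻¹]]`. -/
noncomputable def Bmat (m u : ℂ) : Matrix (Fin 2) (Fin 2) ℂ := !![m, 0; -u, m⁻¹]

/-- `W(m,u) = A^{ε₁}·B^{ε₂}·⋯·A^{ε_{p−2}}·B^{ε_{p−1}}`. -/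
noncomputable def Wmat (p : ℕ) (q : ℤ) (m u : ℂ) : Matrix (Fin 2) (Fin 2) ℂ :=
  ((List.range (p - 1)).map
    (fun i => (if (i + 1) % 2 = 1 then Amat m else Bmat m u) ^ eps p q (i + 1))).prod

/-- `R(m,u) = W·A·W⁻¹·B⁻¹`. -/
noncomputable def Rmat (p : ℕ) (q : ℤ) (m u : ℂ) : Matrix (Fin 2) (Fin 2) ℂ :=
  Wmat p q m u * Amat m * (Wmat p q m u)⁻¹ * (Bmat m u)⁻¹

/-- The two-variable Riley polynomial `φ_W(m,u) = W₁₁ − (m − m⁻¹)W₁₂`. -/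
noncomputable def phiW (p : ℕ) (q : ℤ) (m u : ℂ) : ℂ :=
  Wmat p q m u 0 0 - (m - m⁻¹) * Wmat p q m u 0 1

/-- `M(m,u) = [[W₁₁u − W₂₁m⁻¹, W₁₁m], [W₂₁u + W₂₂um⁻¹, W₂₁m]]`. -/
noncomputable def Mmat (p : ℕ) (q : ℤ) (m u : ℂ) : Matrix (Fin 2) (Fin 2) ℂ :=
  !![Wmat p q m u 0 0 * u - Wmat p q m u 1 0 * m⁻¹, Wmat p q m u 0 0 * m;
     Wmat p q m u 1 0 * u + Wmat p q m u 1 1 * u * m⁻¹, Wmat p q m u 1 0 * m]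

lemma eps_cases (p : ℕ) (q : ℤ) (i : ℕ) : eps p q i = 1 ∨ eps p q i = -1 := by
  unfold eps; split <;> simp

/-- explicit word factor -/
noncomputable def Gfac (p : ℕ) (q : ℤ) (m u : ℂ) (i : ℕ) : Matrix (Fin 2) (Fin 2) ℂ :=
  if (i + 1) % 2 = 1 then
    (if eps p q (i + 1) = 1 then !![m, 1; 0, m⁻¹] else !![m⁻¹, -1; 0, m])
  else
    (if eps p q (i + 1) = 1 then !![m, 0; -u, m⁻¹] else !![m⁻¹, 0; u, m])

/-- letter-swapped explicit word factor -/
noncomputable def GfacOpp (p : ℕ) (q : ℤ) (m u : ℂ) (i : ℕ) : Matrix (Fin 2) (Fin 2) ℂ :=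
  if (i + 1) % 2 = 1 then
    (if eps p q (i + 1) = 1 then !![m, 0; -u, m⁻¹] else !![m⁻¹, 0; u, m])
  else
    (if eps p q (i + 1) = 1 then !![m, 1; 0, m⁻¹] else !![m⁻¹, -1; 0, m])

lemma Amat_inv {m : ℂ} (hm : m ≠ 0) : (Amat m)⁻¹ = !![m⁻¹, -1; 0, m] := by
  rw [Matrix.inv_def]
  simp [Amat, Matrix.det_fin_two_of, Matrix.adjugate_fin_two, hm]

lemma Bmat_inv {m : ℂ} (hm : m ≠ 0) (u : ℂ) : (Bmat m u)⁻¹ = !![m⁻¹, 0; u, m] := by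
  rw [Matrix.inv_def]
  simp [Bmat, Matrix.det_fin_two_of, Matrix.adjugate_fin_two, hm]

lemma Wmat_eq (p : ℕ) (q : ℤ) {m : ℂ} (hm : m ≠ 0) (u : ℂ) :
    Wmat p q m u = ((List.range (p - 1)).map (Gfac p q m u)).prod := by
  unfold Wmat
  congr 1
  refine List.map_congr_left fun i _ => ?_
  rcases eps_cases p q (i + 1) with h | h <;> rw [h] <;> unfold Gfac <;>
    split <;> simp only [if_pos, if_neg, h, zpow_one, Matrix.zpow_neg_one] <;>
      first
        | rfl
        | (rw [if_pos rfl] ; rfl)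
        | (rw [if_neg (by decide)])
  · exact Amat_inv hm
  · exact Bmat_inv hm u

lemma Gfac_det (p : ℕ) (q : ℤ) {m : ℂ} (hm : m ≠ 0) (u : ℂ) (i : ℕ) :
    (Gfac p q m u i).det = 1 := by
  unfold Gfac
  split <;> split <;> simp [Matrix.det_fin_two_of] <;> field_simp

lemma Wmat_det (p : ℕ) (q : ℤ) {m : ℂ} (hm : m ≠ 0) (u : ℂ) :
    (Wmat p q m u).det = 1 := by
  rw [Wmat_eq p q hm u, ← Matrix.coe_detMonoidHom, map_list_prod, List.map_map]
  apply List.prod_eq_one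
  intro x hx
  simp only [List.mem_map] at hx
  obtain ⟨i, _, rfl⟩ := hx
  exact Gfac_det p q hm u i

lemma trans2 (a b c d : ℂ) : (!![a, b; c, d])ᵀ = !![a, c; b, d] := by
  ext i j; fin_cases i <;> fin_cases j <;> rfl

/-- pointwise conjugation-transpose relation -/
lemma Gfac_D (p : ℕ) (q : ℤ) (m u : ℂ) (i : ℕ) :
    Gfac p q m u i * !![1, 0; 0, -u] = !![1, 0; 0, -u] * (GfacOpp p q m u i)ᵀ := by
  unfold Gfac GfacOpp
  split <;> split <;>
    · rw [trans2]
      ext a b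
      fin_cases a <;> fin_cases b <;>
        simp [Matrix.mul_apply, Fin.sum_univ_two] <;> ring

lemma prod_D (u : ℂ) (f g : ℕ → Matrix (Fin 2) (Fin 2) ℂ) :
    ∀ l : List ℕ, (∀ i ∈ l, f i * !![1, 0; 0, -u] = !![1, 0; 0, -u] * (g i)ᵀ) →
      (l.map f).prod * !![1, 0; 0, -u] = !![1, 0; 0, -u] * ((l.reverse.map g).prod)ᵀ
  | [], _ => by simp
  | i :: t, h => by
    have ih := prod_D u f g t (fun j hj => h j (List.mem_cons_of_mem _ hj))
    simp only [List.map_cons, List.prod_cons, List.reverse_cons, List.map_append,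
      List.prod_append, List.map_cons, List.prod_cons, List.map_nil, List.prod_nil,
      mul_one]
    rw [mul_assoc, ih, ← mul_assoc, h i List.mem_cons_self, mul_assoc,
      ← Matrix.transpose_mul]

lemma eps_pal (p : ℕ) (q : ℤ) (hq : Odd q) (hpq : IsCoprime (p : ℤ) q)
    {i : ℕ} (h1 : 1 ≤ i) (h2 : i < p) : eps p q (p - i) = eps p q i := by
  have hp0 : (0:ℤ) < p := by exact_mod_cast Nat.pos_of_ne_zero (by omega)
  have hi0 : (0:ℤ) < i := by exact_mod_cast h1
  have hip : (i:ℤ) < p := by exact_mod_cast h2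
  have hnd : ¬ ((p:ℤ) ∣ (i:ℤ) * q) := by
    intro hdvd
    have hpi : (p:ℤ) ∣ (i:ℤ) := hpq.dvd_of_dvd_mul_right hdvd
    have := Int.le_of_dvd hi0 hpi
    omega
  have hcast : ((p - i : ℕ) : ℤ) = (p:ℤ) - i := by
    push_cast [Nat.cast_sub h2.le]; ring
  have hiq := Int.mul_ediv_add_emod ((i:ℤ) * q) p
  set D := ((i:ℤ) * q) / p with hD
  set r := ((i:ℤ) * q) % p with hr
  have hr0 : 0 < r := by
    rcases (Int.emod_nonneg ((i:ℤ)*q) hp0.ne').lt_or_eq with h | h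
    · exact h
    · exact absurd (Int.dvd_of_emod_eq_zero h.symm) hnd
  have hrp : r < p := Int.emod_lt_of_pos _ hp0
  have hquot : (((p:ℤ) - i) * q) / p = q - D - 1 := by
    have heq : ((p:ℤ) - i) * q = (p - r) + p * (q - D - 1) := by linarith [hiq]
    rw [heq, Int.add_mul_ediv_left _ _ hp0.ne',
      Int.ediv_eq_zero_of_lt (by linarith) (by linarith), zero_add]
  have hfd1 : (((p - i : ℕ) : ℤ) * q).fdiv p = q - D - 1 := by
    rw [Int.fdiv_eq_ediv_of_nonneg _ hp0.le, hcast, hquot]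
  have hfd2 : (((i : ℕ) : ℤ) * q).fdiv p = D := by
    rw [Int.fdiv_eq_ediv_of_nonneg _ hp0.le]
  have hq2 : q % 2 = 1 := Int.odd_iff.mp hq
  unfold eps
  rw [hfd1, hfd2]
  by_cases hDe : D % 2 = 0
  · rw [if_pos hDe, if_pos (by omega)]
  · rw [if_neg hDe, if_neg (by omega)]

lemma Gswap (p : ℕ) (q : ℤ) (m u : ℂ) (hp : p % 2 = 1) (hp3 : 3 ≤ p)
    (hq : Odd q) (hpq : IsCoprime (p : ℤ) q) {k : ℕ} (hk : k < p - 1) :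
    GfacOpp p q m u (p - 2 - k) = Gfac p q m u k := by
  have h1 : (p - 2 - k) + 1 = p - 1 - k := by omega
  have heps : eps p q (p - 1 - k) = eps p q (k + 1) := by
    have h2 : p - 1 - k = p - (k + 1) := by omega
    rw [h2]; exact eps_pal p q hq hpq (by omega) (by omega)
  unfold Gfac GfacOpp
  simp only [h1, heps]
  by_cases hkp : (k + 1) % 2 = 1
  · rw [if_pos hkp, if_neg (by omega)]
  · rw [if_neg hkp, if_pos (by omega)]

lemma rev_map (p : ℕ) (q : ℤ) (m u : ℂ) (hp : p % 2 = 1) (hp3 : 3 ≤ p)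
    (hq : Odd q) (hpq : IsCoprime (p : ℤ) q) :
    (List.range (p - 1)).reverse.map (GfacOpp p q m u) =
      (List.range (p - 1)).map (Gfac p q m u) := by
  apply List.ext_getElem
  · simp
  · intro k h1 h2
    simp only [List.length_map, List.length_reverse, List.length_range] at h1
    simp only [List.getElem_map, List.getElem_reverse, List.getElem_range,
      List.length_range]
    have : p - 1 - 1 - k = p - 2 - k := by omega
    rw [this]
    exact Gswap p q m u hp hp3 hq hpq (by omega)

lemma Wmat_c (p : ℕ) (q : ℤ) {m : ℂ} (u : ℂ) (hp : p % 2 = 1) (hp3 : 3 ≤ p)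
    (hq : Odd q) (hpq : IsCoprime (p : ℤ) q) (hm : m ≠ 0) :
    Wmat p q m u 1 0 = -u * Wmat p q m u 0 1 := by
  have h := prod_D u (Gfac p q m u) (GfacOpp p q m u) (List.range (p - 1))
    (fun i _ => Gfac_D p q m u i)
  rw [rev_map p q m u hp hp3 hq hpq] at h
  rw [← Wmat_eq p q hm u] at h
  have h2 := congrFun (congrFun h 1) 0
  simpa [Matrix.mul_apply, Fin.sum_univ_two, Matrix.transpose_apply] using h2


lemma Wmat_inv (p : ℕ) (q : ℤ) {m : ℂ} (hm : m ≠ 0) (u : ℂ) :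
    (Wmat p q m u)⁻¹ =
      !![Wmat p q m u 1 1, -Wmat p q m u 0 1; -Wmat p q m u 1 0, Wmat p q m u 0 0] := by
  rw [Matrix.inv_def, Wmat_det p q hm u, Matrix.adjugate_fin_two]
  simp

lemma key (p : ℕ) (q : ℤ) {m : ℂ} (u : ℂ) (hp : p % 2 = 1) (hp3 : 3 ≤ p)
    (hq : Odd q) (hpq : IsCoprime (p : ℤ) q) (hm : m ≠ 0) (i j : Fin 2) :
    Rmat p q m u i j = (if i = j then 1 else 0) + phiW p q m u * Mmat p q m u i j := by
  have hdet : Wmat p q m u 0 0 * Wmat p q m u 1 1 - Wmat p q m u 0 1 * Wmat p q m u 1 0 = 1 := by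
    rw [← Matrix.det_fin_two]; exact Wmat_det p q hm u
  have hc := Wmat_c p q u hp hp3 hq hpq hm
  rw [Rmat, Wmat_inv p q hm u, Bmat_inv hm u]
  rw [hc] at hdet ⊢
  set a := Wmat p q m u 0 0
  set b := Wmat p q m u 0 1
  set d := Wmat p q m u 1 1
  fin_cases i <;> fin_cases j <;>
    simp only [phiW, Mmat, Amat, hc, Matrix.mul_apply, Fin.sum_univ_two,
      Matrix.cons_val_zero, Matrix.cons_val_one, Matrix.head_cons, Matrix.head_fin_const,
      Matrix.cons_val', Matrix.empty_val', Matrix.cons_val_fin_one, Fin.isValue,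
      Fin.mk_zero, Fin.mk_one, if_true, if_false, Matrix.of_apply, zero_ne_one, one_ne_zero] <;>
    field_simp
  · linear_combination (m^2) * hdet
  · ring
  · ring
  · linear_combination m * hdet

lemma diff_prod (x₀ : ℂ) (f : ℂ → ℕ → Matrix (Fin 2) (Fin 2) ℂ) :
    ∀ l : List ℕ, (∀ i ∈ l, ∀ a b : Fin 2, DifferentiableAt ℂ (fun x => f x i a b) x₀) →
      ∀ a b : Fin 2, DifferentiableAt ℂ (fun x => ((l.map (f x)).prod) a b) x₀
  | [], _ => by
    intro a b
    simp only [List.map_nil, List.prod_nil]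
    exact differentiableAt_const _
  | i :: t, h => by
    intro a b
    have ih := diff_prod x₀ f t (fun j hj => h j (List.mem_cons_of_mem _ hj))
    simp only [List.map_cons, List.prod_cons, Matrix.mul_apply, Fin.sum_univ_two]
    exact ((h i List.mem_cons_self a 0).mul (ih 0 b)).add
      ((h i List.mem_cons_self a 1).mul (ih 1 b))

lemma diffm_G (p : ℕ) (q : ℤ) (u : ℂ) {m₀ : ℂ} (hm : m₀ ≠ 0) (i : ℕ) (a b : Fin 2) :
    DifferentiableAt ℂ (fun m => Gfac p q m u i a b) m₀ := by
  have hinv : DifferentiableAt ℂ (fun m : ℂ => m⁻¹) m₀ := differentiableAt_inv hm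
  unfold Gfac
  by_cases h1 : (i + 1) % 2 = 1 <;> by_cases h2 : eps p q (i + 1) = 1 <;>
    simp only [h1, h2, if_true, if_false] <;> fin_cases a <;> fin_cases b <;> simp <;>
    first
      | exact differentiableAt_const _
      | exact differentiableAt_fun_id
      | exact hinv
      | exact hinv.neg

lemma diffu_G (p : ℕ) (q : ℤ) (m : ℂ) (u₀ : ℂ) (i : ℕ) (a b : Fin 2) :
    DifferentiableAt ℂ (fun u => Gfac p q m u i a b) u₀ := by
  unfold Gfac
  by_cases h1 : (i + 1) % 2 = 1 <;> by_cases h2 : eps p q (i + 1) = 1 <;>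
    simp only [h1, h2, if_true, if_false] <;> fin_cases a <;> fin_cases b <;> simp <;>
    first
      | exact differentiableAt_const _
      | exact differentiableAt_fun_id
      | exact differentiableAt_fun_id.neg

lemma diffm_W (p : ℕ) (q : ℤ) (u : ℂ) {m₀ : ℂ} (hm : m₀ ≠ 0) (a b : Fin 2) :
    DifferentiableAt ℂ (fun m => Wmat p q m u a b) m₀ := by
  have h := diff_prod m₀ (fun m i => Gfac p q m u i) (List.range (p - 1))
    (fun i _ a b => diffm_G p q u hm i a b) a b
  apply h.congr_of_eventuallyEq
  filter_upwards [eventually_ne_nhds hm] with m hm'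
  rw [Wmat_eq p q hm' u]

lemma diffu_W (p : ℕ) (q : ℤ) {m₀ : ℂ} (hm : m₀ ≠ 0) (u₀ : ℂ) (a b : Fin 2) :
    DifferentiableAt ℂ (fun u => Wmat p q m₀ u a b) u₀ := by
  have h := diff_prod u₀ (fun u i => Gfac p q m₀ u i) (List.range (p - 1))
    (fun i _ a b => diffu_G p q m₀ u₀ i a b) a b
  apply h.congr_of_eventuallyEq
  filter_upwards with u
  rw [Wmat_eq p q hm u]

lemma diffm_phi (p : ℕ) (q : ℤ) (u : ℂ) {m₀ : ℂ} (hm : m₀ ≠ 0) :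
    DifferentiableAt ℂ (fun m => phiW p q m u) m₀ := by
  unfold phiW
  exact (diffm_W p q u hm 0 0).sub
    ((differentiableAt_fun_id.sub (differentiableAt_inv hm)).mul (diffm_W p q u hm 0 1))

lemma diffu_phi (p : ℕ) (q : ℤ) {m₀ : ℂ} (hm : m₀ ≠ 0) (u₀ : ℂ) :
    DifferentiableAt ℂ (fun u => phiW p q m₀ u) u₀ := by
  unfold phiW
  exact (diffu_W p q hm u₀ 0 0).sub (differentiableAt_const _ |>.mul (diffu_W p q hm u₀ 0 1))

lemma diffm_M (p : ℕ) (q : ℤ) (u : ℂ) {m₀ : ℂ} (hm : m₀ ≠ 0) (i j : Fin 2) :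
    DifferentiableAt ℂ (fun m => Mmat p q m u i j) m₀ := by
  have hinv : DifferentiableAt ℂ (fun m : ℂ => m⁻¹) m₀ := differentiableAt_inv hm
  fin_cases i <;> fin_cases j <;> simp only [Mmat, Matrix.cons_val_zero,
    Matrix.cons_val_one, Matrix.head_cons, Matrix.cons_val', Matrix.empty_val',
    Matrix.cons_val_fin_one, Matrix.head_fin_const, Fin.mk_zero, Fin.mk_one, Fin.isValue]
  · exact ((diffm_W p q u hm 0 0).mul (differentiableAt_const _)).sub
      ((diffm_W p q u hm 1 0).mul hinv)
  · exact (diffm_W p q u hm 0 0).mul differentiableAt_fun_id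
  · exact ((diffm_W p q u hm 1 0).mul (differentiableAt_const _)).add
      (((diffm_W p q u hm 1 1).mul (differentiableAt_const _)).mul hinv)
  · exact (diffm_W p q u hm 1 0).mul differentiableAt_fun_id

lemma diffu_M (p : ℕ) (q : ℤ) {m₀ : ℂ} (hm : m₀ ≠ 0) (u₀ : ℂ) (i j : Fin 2) :
    DifferentiableAt ℂ (fun u => Mmat p q m₀ u i j) u₀ := by
  fin_cases i <;> fin_cases j <;> simp only [Mmat, Matrix.cons_val_zero,
    Matrix.cons_val_one, Matrix.head_cons, Matrix.cons_val', Matrix.empty_val',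
    Matrix.cons_val_fin_one, Matrix.head_fin_const, Fin.mk_zero, Fin.mk_one, Fin.isValue]
  · exact ((diffu_W p q hm u₀ 0 0).mul differentiableAt_fun_id).sub
      ((diffu_W p q hm u₀ 1 0).mul (differentiableAt_const _))
  · exact (diffu_W p q hm u₀ 0 0).mul (differentiableAt_const _)
  · exact ((diffu_W p q hm u₀ 1 0).mul differentiableAt_fun_id).add
      (((diffu_W p q hm u₀ 1 1).mul differentiableAt_fun_id).mul (differentiableAt_const _))
  · exact (diffu_W p q hm u₀ 1 0).mul (differentiableAt_const _)

theorem stmt_14 (p : ℕ) (q : ℤ) (hp : Odd p) (hq : Odd q)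
    (hpq : IsCoprime (p : ℤ) q) (hp3 : 3 ≤ p)
    (hql : -(p : ℤ) < q) (hqu : q < (p : ℤ))
    (m₀ u₀ : ℂ) (hm : m₀ ≠ 0) (hphi : phiW p q m₀ u₀ = 0) :
    ∀ i j : Fin 2,
      deriv (fun m => Rmat p q m u₀ i j) m₀ =
        deriv (fun m => phiW p q m u₀) m₀ * Mmat p q m₀ u₀ i j ∧
      deriv (fun u => Rmat p q m₀ u i j) u₀ =
        deriv (fun u => phiW p q m₀ u) u₀ * Mmat p q m₀ u₀ i j := by
  have hp2 : p % 2 = 1 := Nat.odd_iff.mp hp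
  intro i j
  constructor
  · have hev : (fun m => Rmat p q m u₀ i j) =ᶠ[nhds m₀]
        (fun m => (if i = j then (1:ℂ) else 0) + phiW p q m u₀ * Mmat p q m u₀ i j) := by
      filter_upwards [eventually_ne_nhds hm] with m hm'
      exact key p q u₀ hp2 hp3 hq hpq hm' i j
    rw [hev.deriv_eq, deriv_const_add,
      deriv_fun_mul (diffm_phi p q u₀ hm) (diffm_M p q u₀ hm i j), hphi, zero_mul, add_zero]
  · have heq : (fun u => Rmat p q m₀ u i j) =
        (fun u => (if i = j then (1:ℂ) else 0) + phiW p q m₀ u * Mmat p q m₀ u i j) :=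
      funext fun u => key p q u hp2 hp3 hq hpq hm i j
    rw [heq, deriv_const_add,
      deriv_fun_mul (diffu_phi p q hm u₀) (diffu_M p q hm u₀ i j), hphi, zero_mul, add_zero]
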